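/- Let X_j, Y_j (j = 1,…,N) be finite-dimensional systems, X := ⊗_j X_j, Y := ⊗_j Y_j, and let J be a positive semidefinite matrix on X⊗Y with L^NS_{XY}(J) = J. Suppose a real number m and Hermitian matrices E, F on X⊗Y satisfy: tr[E·J] ≥ m; tr_X E = I_Y; 0 ⪯ E ⪯ F; L^NS_{XY}(F) = (m/d_X)·I_{XY}. Suppose Hermitian matrices M on X⊗Y and N on Y satisfy: L^NS_{XY}(M) ⪰ 0 and L^NS_{XY}(M) + I_X⊗N ⪰ (1 + tr[M]/d_X)·J. Then m ≤ tr[N]. -/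

import Mathlib

/-!
STATEMENT 11: Weak duality between the primal and dual SDPs for the one-shot zero-error
classical capacity assisted by free general supermaps: for J ⪰ 0 with L^NS(J) = J,
any primal feasible (m, E, F) and dual feasible (M, N) satisfy m ≤ tr N.
-/

open Matrix Kronecker
open scoped ComplexOrder

namespace ICO

variable {N' : ℕ} {κX κY : Fin N' → Type}
  [∀ j, Fintype (κX j)] [∀ j, DecidableEq (κX j)]
  [∀ j, Fintype (κY j)] [∀ j, DecidableEq (κY j)]

/-- Smoothing over the factor `Y j`. -/
noncomputable def floorY (j : Fin N')
    (P : Matrix ((∀ i, κX i) × (∀ i, κY i)) ((∀ i, κX i) × (∀ i, κY i)) ℂ) :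
    Matrix ((∀ i, κX i) × (∀ i, κY i)) ((∀ i, κX i) × (∀ i, κY i)) ℂ :=
  Matrix.of fun p q =>
    if p.2 j = q.2 j then
      (Fintype.card (κY j) : ℂ)⁻¹ *
        ∑ c : κY j, P (p.1, Function.update p.2 j c) (q.1, Function.update q.2 j c)
    else 0

/-- Smoothing over the factors `X j ⊗ Y j`. -/
noncomputable def floorXY (j : Fin N')
    (P : Matrix ((∀ i, κX i) × (∀ i, κY i)) ((∀ i, κX i) × (∀ i, κY i)) ℂ) :
    Matrix ((∀ i, κX i) × (∀ i, κY i)) ((∀ i, κX i) × (∀ i, κY i)) ℂ :=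
  Matrix.of fun p q =>
    if p.1 j = q.1 j ∧ p.2 j = q.2 j then
      ((Fintype.card (κX j) : ℂ) * (Fintype.card (κY j) : ℂ))⁻¹ *
        ∑ a : κX j, ∑ c : κY j,
          P (Function.update p.1 j a, Function.update p.2 j c)
            (Function.update q.1 j a, Function.update q.2 j c)
    else 0

/-- `L^NS_{X_jY_j}(P) := P − ⌊Y_j⌋P + ⌊X_jY_j⌋P`. -/
noncomputable def LNSstep (j : Fin N')
    (P : Matrix ((∀ i, κX i) × (∀ i, κY i)) ((∀ i, κX i) × (∀ i, κY i)) ℂ) :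
    Matrix ((∀ i, κX i) × (∀ i, κY i)) ((∀ i, κX i) × (∀ i, κY i)) ℂ :=
  P - floorY j P + floorXY j P

/-- `L^NS_{XY} := L^NS_{X₁Y₁} ∘ ⋯ ∘ L^NS_{X_NY_N}`. -/
noncomputable def LNS
    (P : Matrix ((∀ i, κX i) × (∀ i, κY i)) ((∀ i, κX i) × (∀ i, κY i)) ℂ) :
    Matrix ((∀ i, κX i) × (∀ i, κY i)) ((∀ i, κX i) × (∀ i, κY i)) ℂ :=
  (List.finRange N').foldr (fun j Q => LNSstep j Q) P


section AuxWeakDuality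
set_option linter.unusedSectionVars false
open Matrix
-- helper lemmas, generic
lemma upd_swap {ι : Type*} [DecidableEq ι] {β : ι → Type*} {f g : ∀ i, β i} {j : ι} {b : β j} {c : β j}
    (h1 : f = Function.update g j b) (h2 : g j = c) :
    g = Function.update f j c ∧ f j = b := by
  subst h1
  refine ⟨?_, Function.update_self _ _ _⟩
  rw [Function.update_idem, ← h2, Function.update_eq_self]

lemma sum_if_eq_mul {n : Type*} [Fintype n] [DecidableEq n] (e : n) (C : Prop) [Decidable C] (f : n → ℂ) :
    ∑ r, (if r = e ∧ C then 1 else 0) * f r = if C then f e else 0 := by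
  by_cases h : C <;> simp [h]

lemma mul_sum_if_eq {n : Type*} [Fintype n] [DecidableEq n] (e : n) (C : Prop) [Decidable C] (f : n → ℂ) :
    ∑ s, f s * (if s = e ∧ C then 1 else 0) = if C then f e else 0 := by
  by_cases h : C <;> simp [h]

lemma sum_diag_ite {n : Type*} [Fintype n] [DecidableEq n] (u v : n) (S : ℂ) :
    (∑ b : n, if u = b ∧ v = b then S else 0) = if u = v then S else 0 := by
  by_cases h : u = v
  · subst h; simp
  · have h' : ∀ b, ¬(u = b ∧ v = b) := fun b hb => h (hb.1.trans hb.2.symm)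
    simp [h', h]

lemma sum_ite_const {n : Type*} [Fintype n] (C : Prop) [Decidable C] (f : n → ℂ) :
    ∑ c : n, (if C then f c else 0) = if C then ∑ c, f c else 0 := by
  by_cases h : C <;> simp [h]

lemma sum_swap3 {α β γ : Type*} [Fintype α] [Fintype β] [Fintype γ]
    (f : α → β → γ → ℂ) :
    ∑ a, ∑ b, ∑ c, f a b c = ∑ b, ∑ c, ∑ a, f a b c := by
  have h1 : ∑ a : α, ∑ q : β × γ, f a q.1 q.2 = ∑ a, ∑ b, ∑ c, f a b c := by
    simp [Fintype.sum_prod_type]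
  have h2 : ∑ q : β × γ, ∑ a : α, f a q.1 q.2 = ∑ b, ∑ c, ∑ a, f a b c := by
    simp [Fintype.sum_prod_type]
  rw [← h1, ← h2, Finset.sum_comm]

lemma sum_swap4 {α β γ δ : Type*} [Fintype α] [Fintype β] [Fintype γ] [Fintype δ]
    (f : α → β → γ → δ → ℂ) :
    ∑ a, ∑ b, ∑ c, ∑ d, f a b c d = ∑ c, ∑ d, ∑ a, ∑ b, f a b c d := by
  have h1 : ∑ p : α × β, ∑ q : γ × δ, f p.1 p.2 q.1 q.2 = ∑ a, ∑ b, ∑ c, ∑ d, f a b c d := by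
    simp [Fintype.sum_prod_type]
  have h2 : ∑ q : γ × δ, ∑ p : α × β, f p.1 p.2 q.1 q.2 = ∑ c, ∑ d, ∑ a, ∑ b, f a b c d := by
    simp [Fintype.sum_prod_type]
  rw [← h1, ← h2, Finset.sum_comm]

lemma sum_fst {α β : Type*} [Fintype α] [Fintype β] (f : α → ℂ) :
    ∑ q : α × β, f q.1 = (Fintype.card β : ℂ) * ∑ a, f a := by
  rw [Fintype.sum_prod_type]
  simp [Finset.sum_const, nsmul_eq_mul, Finset.mul_sum]

open scoped ComplexOrder in
lemma trace_nonneg_of_psd {n : Type*} [Fintype n] [DecidableEq n] {A : Matrix n n ℂ}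
    (hA : A.PosSemidef) : 0 ≤ A.trace := by
  refine Finset.sum_nonneg fun i _ => ?_
  exact hA.diag_nonneg

open scoped ComplexOrder in
lemma trace_mul_nonneg_of_psd {n : Type*} [Fintype n] [DecidableEq n] {A B : Matrix n n ℂ}
    (hA : A.PosSemidef) (hB : B.PosSemidef) : 0 ≤ (A * B).trace := by
  open scoped MatrixOrder in obtain ⟨C, rfl⟩ := CStarAlgebra.nonneg_iff_eq_star_mul_self.mp hB.nonneg
  rw [← Matrix.mul_assoc, Matrix.trace_mul_cycle]
  exact trace_nonneg_of_psd (hA.mul_mul_conjTranspose_same C)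

/-- Kraus operator for `floorY`. -/
noncomputable def KY (j : Fin N') (b c : κY j) :
    Matrix ((∀ i, κX i) × (∀ i, κY i)) ((∀ i, κX i) × (∀ i, κY i)) ℂ :=
  Matrix.of fun p q =>
    if p = (q.1, Function.update q.2 j b) ∧ q.2 j = c then 1 else 0

lemma KY_apply' (j : Fin N') (b c : κY j) (p q : (∀ i, κX i) × (∀ i, κY i)) :
    KY (κX := κX) j b c p q
      = if q = (p.1, Function.update p.2 j c) ∧ p.2 j = b then 1 else 0 := by
  simp only [KY, Matrix.of_apply]
  refine if_congr ?_ rfl rfl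
  constructor
  · rintro ⟨h1, h2⟩
    have h1' : p.2 = Function.update q.2 j b := by rw [h1]
    obtain ⟨ha, hb⟩ := upd_swap h1' h2
    have : p.1 = q.1 := by rw [h1]
    refine ⟨Prod.ext this.symm ha, hb⟩
  · rintro ⟨h1, h2⟩
    have h1' : q.2 = Function.update p.2 j c := by rw [h1]
    obtain ⟨ha, hb⟩ := upd_swap h1' h2
    have : q.1 = p.1 := by rw [h1]
    refine ⟨Prod.ext this.symm ha, hb⟩

lemma KY_conjTranspose (j : Fin N') (b c : κY j) :
    (KY (κX := κX) (κY := κY) j b c)ᴴ = KY j c b := by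
  ext p q
  rw [Matrix.conjTranspose_apply, KY_apply']
  simp only [KY, Matrix.of_apply, apply_ite (star : ℂ → ℂ), star_one, star_zero]

lemma KY_mul_apply (j : Fin N') (b c : κY j)
    (A : Matrix ((∀ i, κX i) × (∀ i, κY i)) ((∀ i, κX i) × (∀ i, κY i)) ℂ) (p q : (∀ i, κX i) × (∀ i, κY i)) :
    (KY (κX := κX) j b c * A) p q
      = if p.2 j = b then A (p.1, Function.update p.2 j c) q else 0 := by
  rw [Matrix.mul_apply]
  simp only [KY_apply']
  exact sum_if_eq_mul _ _ _

lemma mul_KY_apply (j : Fin N') (b c : κY j)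
    (A : Matrix ((∀ i, κX i) × (∀ i, κY i)) ((∀ i, κX i) × (∀ i, κY i)) ℂ) (p q : (∀ i, κX i) × (∀ i, κY i)) :
    (A * KY (κX := κX) j b c) p q
      = if q.2 j = c then A p (q.1, Function.update q.2 j b) else 0 := by
  rw [Matrix.mul_apply]
  simp only [KY, Matrix.of_apply]
  exact mul_sum_if_eq _ _ _

lemma KY_mul_mul (j : Fin N') (b c : κY j)
    (P : Matrix ((∀ i, κX i) × (∀ i, κY i)) ((∀ i, κX i) × (∀ i, κY i)) ℂ) (p q : (∀ i, κX i) × (∀ i, κY i)) :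
    (KY (κX := κX) j b c * P * (KY (κX := κX) j b c)ᴴ) p q
      = if p.2 j = b ∧ q.2 j = b then
          P (p.1, Function.update p.2 j c) (q.1, Function.update q.2 j c) else 0 := by
  rw [KY_conjTranspose, mul_KY_apply, KY_mul_apply]
  by_cases h1 : p.2 j = b <;> by_cases h2 : q.2 j = b <;> simp [h1, h2]

lemma floorY_eq_kraus (j : Fin N')
    (P : Matrix ((∀ i, κX i) × (∀ i, κY i)) ((∀ i, κX i) × (∀ i, κY i)) ℂ) :
    floorY j P = (Fintype.card (κY j) : ℂ)⁻¹ • ∑ b : κY j, ∑ c : κY j,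
      KY j b c * P * (KY j b c)ᴴ := by
  ext p q
  simp only [floorY, Matrix.of_apply, Matrix.smul_apply, Matrix.sum_apply, KY_mul_mul,
    smul_eq_mul]
  simp only [sum_ite_const, sum_diag_ite, mul_ite, mul_zero]


/-- Kraus operator for `floorXY`. -/
noncomputable def KXY (j : Fin N') (s t : κX j × κY j) :
    Matrix ((∀ i, κX i) × (∀ i, κY i)) ((∀ i, κX i) × (∀ i, κY i)) ℂ :=
  Matrix.of fun p q =>
    if p = (Function.update q.1 j s.1, Function.update q.2 j s.2) ∧ (q.1 j, q.2 j) = t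
    then 1 else 0

lemma KXY_apply' (j : Fin N') (s t : κX j × κY j) (p q : (∀ i, κX i) × (∀ i, κY i)) :
    KXY (κX := κX) j s t p q
      = if q = (Function.update p.1 j t.1, Function.update p.2 j t.2) ∧ (p.1 j, p.2 j) = s
        then 1 else 0 := by
  simp only [KXY, Matrix.of_apply]
  refine if_congr ?_ rfl rfl
  simp only [Prod.ext_iff, Prod.mk.injEq]
  constructor
  · rintro ⟨⟨h1, h2⟩, h3, h4⟩
    obtain ⟨ha, hb⟩ := upd_swap h1 h3
    obtain ⟨hc, hd⟩ := upd_swap h2 h4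
    exact ⟨⟨ha, hc⟩, hb, hd⟩
  · rintro ⟨⟨h1, h2⟩, h3, h4⟩
    obtain ⟨ha, hb⟩ := upd_swap h1 h3
    obtain ⟨hc, hd⟩ := upd_swap h2 h4
    exact ⟨⟨ha, hc⟩, hb, hd⟩

lemma KXY_conjTranspose (j : Fin N') (s t : κX j × κY j) :
    (KXY (κX := κX) (κY := κY) j s t)ᴴ = KXY j t s := by
  ext p q
  rw [Matrix.conjTranspose_apply, KXY_apply']
  simp only [KXY, Matrix.of_apply, apply_ite (star : ℂ → ℂ), star_one, star_zero]

lemma KXY_mul_apply (j : Fin N') (s t : κX j × κY j)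
    (A : Matrix ((∀ i, κX i) × (∀ i, κY i)) ((∀ i, κX i) × (∀ i, κY i)) ℂ)
    (p q : (∀ i, κX i) × (∀ i, κY i)) :
    (KXY (κX := κX) j s t * A) p q
      = if (p.1 j, p.2 j) = s
        then A (Function.update p.1 j t.1, Function.update p.2 j t.2) q else 0 := by
  rw [Matrix.mul_apply]
  simp only [KXY_apply']
  exact sum_if_eq_mul _ _ _

lemma mul_KXY_apply (j : Fin N') (s t : κX j × κY j)
    (A : Matrix ((∀ i, κX i) × (∀ i, κY i)) ((∀ i, κX i) × (∀ i, κY i)) ℂ)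
    (p q : (∀ i, κX i) × (∀ i, κY i)) :
    (A * KXY (κX := κX) j s t) p q
      = if (q.1 j, q.2 j) = t
        then A p (Function.update q.1 j s.1, Function.update q.2 j s.2) else 0 := by
  rw [Matrix.mul_apply]
  simp only [KXY, Matrix.of_apply]
  exact mul_sum_if_eq _ _ _

lemma KXY_mul_mul (j : Fin N') (s t : κX j × κY j)
    (P : Matrix ((∀ i, κX i) × (∀ i, κY i)) ((∀ i, κX i) × (∀ i, κY i)) ℂ)
    (p q : (∀ i, κX i) × (∀ i, κY i)) :
    (KXY (κX := κX) j s t * P * (KXY (κX := κX) j s t)ᴴ) p q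
      = if (p.1 j, p.2 j) = s ∧ (q.1 j, q.2 j) = s then
          P (Function.update p.1 j t.1, Function.update p.2 j t.2)
            (Function.update q.1 j t.1, Function.update q.2 j t.2) else 0 := by
  rw [KXY_conjTranspose, mul_KXY_apply, KXY_mul_apply]
  by_cases h1 : (p.1 j, p.2 j) = s <;> by_cases h2 : (q.1 j, q.2 j) = s <;> simp [h1, h2]

lemma floorXY_eq_kraus (j : Fin N')
    (P : Matrix ((∀ i, κX i) × (∀ i, κY i)) ((∀ i, κX i) × (∀ i, κY i)) ℂ) :
    floorXY j P = ((Fintype.card (κX j) : ℂ) * (Fintype.card (κY j) : ℂ))⁻¹ •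
      ∑ s : κX j × κY j, ∑ t : κX j × κY j, KXY j s t * P * (KXY j s t)ᴴ := by
  ext p q
  simp only [floorXY, Matrix.of_apply, Matrix.smul_apply, Matrix.sum_apply, KXY_mul_mul,
    smul_eq_mul, sum_ite_const, sum_diag_ite, mul_ite, mul_zero]
  by_cases h : p.1 j = q.1 j ∧ p.2 j = q.2 j <;>
    simp [h, Prod.mk.injEq, Fintype.sum_prod_type]

lemma trace_KY_term (j : Fin N') (b c : κY j)
    (P Q : Matrix ((∀ i, κX i) × (∀ i, κY i)) ((∀ i, κX i) × (∀ i, κY i)) ℂ) :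
    ((KY j b c * P * (KY j b c)ᴴ) * Q).trace
      = (P * (KY j c b * Q * (KY j c b)ᴴ)).trace := by
  simp only [KY_conjTranspose, Matrix.mul_assoc]
  rw [Matrix.trace_mul_comm]
  simp only [Matrix.mul_assoc]

lemma trace_KXY_term (j : Fin N') (s t : κX j × κY j)
    (P Q : Matrix ((∀ i, κX i) × (∀ i, κY i)) ((∀ i, κX i) × (∀ i, κY i)) ℂ) :
    ((KXY j s t * P * (KXY j s t)ᴴ) * Q).trace
      = (P * (KXY j t s * Q * (KXY j t s)ᴴ)).trace := by
  simp only [KXY_conjTranspose, Matrix.mul_assoc]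
  rw [Matrix.trace_mul_comm]
  simp only [Matrix.mul_assoc]

lemma trace_floorY_mul (j : Fin N')
    (P Q : Matrix ((∀ i, κX i) × (∀ i, κY i)) ((∀ i, κX i) × (∀ i, κY i)) ℂ) :
    ((floorY j P) * Q).trace = (P * floorY j Q).trace := by
  rw [floorY_eq_kraus, floorY_eq_kraus]
  rw [Matrix.smul_mul, Matrix.mul_smul, Matrix.trace_smul, Matrix.trace_smul]
  congr 1
  simp only [Finset.sum_mul, Finset.mul_sum, Matrix.trace_sum]
  rw [Finset.sum_comm]
  exact Finset.sum_congr rfl fun c _ => Finset.sum_congr rfl fun b _ => trace_KY_term j b c P Q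

lemma trace_floorXY_mul (j : Fin N')
    (P Q : Matrix ((∀ i, κX i) × (∀ i, κY i)) ((∀ i, κX i) × (∀ i, κY i)) ℂ) :
    ((floorXY j P) * Q).trace = (P * floorXY j Q).trace := by
  rw [floorXY_eq_kraus, floorXY_eq_kraus]
  rw [Matrix.smul_mul, Matrix.mul_smul, Matrix.trace_smul, Matrix.trace_smul]
  congr 1
  simp only [Finset.sum_mul, Finset.mul_sum, Matrix.trace_sum]
  rw [Finset.sum_comm]
  exact Finset.sum_congr rfl fun t _ => Finset.sum_congr rfl fun s _ => trace_KXY_term j s t P Q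

lemma trace_LNSstep_mul (j : Fin N')
    (P Q : Matrix ((∀ i, κX i) × (∀ i, κY i)) ((∀ i, κX i) × (∀ i, κY i)) ℂ) :
    ((LNSstep j P) * Q).trace = (P * LNSstep j Q).trace := by
  simp only [LNSstep, Matrix.sub_mul, Matrix.add_mul, Matrix.mul_sub, Matrix.mul_add,
    Matrix.trace_add, Matrix.trace_sub, trace_floorY_mul, trace_floorXY_mul]

lemma floorY_floorY_comm (j k : Fin N') (h : j ≠ k)
    (P : Matrix ((∀ i, κX i) × (∀ i, κY i)) ((∀ i, κX i) × (∀ i, κY i)) ℂ) :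
    floorY j (floorY k P) = floorY k (floorY j P) := by
  ext p q
  simp only [floorY, Matrix.of_apply, Function.update_of_ne h, Function.update_of_ne (Ne.symm h)]
  by_cases h1 : p.2 j = q.2 j <;> by_cases h2 : p.2 k = q.2 k <;>
    simp only [h1, h2, if_true, if_false, mul_zero, Finset.sum_const_zero, if_neg, ite_true,
      ite_false]
  · simp only [Finset.mul_sum]
    rw [Finset.sum_comm]
    refine Finset.sum_congr rfl fun d _ => Finset.sum_congr rfl fun c _ => ?_
    simp only [Function.update_comm h]
    ring

lemma floorY_floorXY_comm (j k : Fin N') (h : j ≠ k)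
    (P : Matrix ((∀ i, κX i) × (∀ i, κY i)) ((∀ i, κX i) × (∀ i, κY i)) ℂ) :
    floorY j (floorXY k P) = floorXY k (floorY j P) := by
  ext p q
  simp only [floorY, floorXY, Matrix.of_apply, Function.update_of_ne h,
    Function.update_of_ne (Ne.symm h)]
  by_cases h1 : p.2 j = q.2 j <;> by_cases h2 : p.1 k = q.1 k <;> by_cases h3 : p.2 k = q.2 k <;>
    simp only [h1, h2, h3, true_and, false_and, and_true, and_false, if_true, if_false,
      mul_zero, Finset.sum_const_zero, ite_true, ite_false]
  simp only [Finset.mul_sum]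
  rw [sum_swap3]
  refine Finset.sum_congr rfl fun a _ => Finset.sum_congr rfl fun d _ =>
    Finset.sum_congr rfl fun c _ => ?_
  simp only [Function.update_comm h]
  ring

lemma floorXY_floorXY_comm (j k : Fin N') (h : j ≠ k)
    (P : Matrix ((∀ i, κX i) × (∀ i, κY i)) ((∀ i, κX i) × (∀ i, κY i)) ℂ) :
    floorXY j (floorXY k P) = floorXY k (floorXY j P) := by
  ext p q
  simp only [floorXY, Matrix.of_apply, Function.update_of_ne h,
    Function.update_of_ne (Ne.symm h)]
  by_cases h1 : p.1 j = q.1 j <;> by_cases h2 : p.2 j = q.2 j <;>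
    by_cases h3 : p.1 k = q.1 k <;> by_cases h4 : p.2 k = q.2 k <;>
    simp only [h1, h2, h3, h4, true_and, false_and, and_true, and_false, if_true, if_false,
      mul_zero, Finset.sum_const_zero, ite_true, ite_false]
  simp only [Finset.mul_sum]
  rw [sum_swap4]
  refine Finset.sum_congr rfl fun a _ => Finset.sum_congr rfl fun b _ =>
    Finset.sum_congr rfl fun c _ => Finset.sum_congr rfl fun d _ => ?_
  simp only [Function.update_comm h]
  ring

lemma floorY_add (j : Fin N')
    (A B : Matrix ((∀ i, κX i) × (∀ i, κY i)) ((∀ i, κX i) × (∀ i, κY i)) ℂ) :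
    floorY j (A + B) = floorY j A + floorY j B := by
  ext p q
  simp only [floorY, Matrix.of_apply, Matrix.add_apply]
  by_cases h : p.2 j = q.2 j <;> simp [h, Finset.sum_add_distrib, mul_add]

lemma floorY_sub (j : Fin N')
    (A B : Matrix ((∀ i, κX i) × (∀ i, κY i)) ((∀ i, κX i) × (∀ i, κY i)) ℂ) :
    floorY j (A - B) = floorY j A - floorY j B := by
  ext p q
  simp only [floorY, Matrix.of_apply, Matrix.sub_apply]
  by_cases h : p.2 j = q.2 j <;> simp [h, Finset.sum_sub_distrib, mul_sub]

lemma floorXY_add (j : Fin N')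
    (A B : Matrix ((∀ i, κX i) × (∀ i, κY i)) ((∀ i, κX i) × (∀ i, κY i)) ℂ) :
    floorXY j (A + B) = floorXY j A + floorXY j B := by
  ext p q
  simp only [floorXY, Matrix.of_apply, Matrix.add_apply]
  by_cases h : p.1 j = q.1 j ∧ p.2 j = q.2 j <;> simp [h, Finset.sum_add_distrib, mul_add]

lemma floorXY_sub (j : Fin N')
    (A B : Matrix ((∀ i, κX i) × (∀ i, κY i)) ((∀ i, κX i) × (∀ i, κY i)) ℂ) :
    floorXY j (A - B) = floorXY j A - floorXY j B := by
  ext p q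
  simp only [floorXY, Matrix.of_apply, Matrix.sub_apply]
  by_cases h : p.1 j = q.1 j ∧ p.2 j = q.2 j <;> simp [h, Finset.sum_sub_distrib, mul_sub]

lemma LNSstep_comm (j k : Fin N')
    (P : Matrix ((∀ i, κX i) × (∀ i, κY i)) ((∀ i, κX i) × (∀ i, κY i)) ℂ) :
    LNSstep j (LNSstep k P) = LNSstep k (LNSstep j P) := by
  rcases eq_or_ne j k with rfl | h
  · rfl
  · simp only [LNSstep, floorY_sub, floorY_add, floorXY_sub, floorXY_add]
    rw [floorY_floorY_comm j k h, floorY_floorXY_comm j k h, floorY_floorXY_comm k j h.symm,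
      floorXY_floorXY_comm j k h]
    abel

lemma LNSstep_foldr (a : Fin N') (l : List (Fin N'))
    (P : Matrix ((∀ i, κX i) × (∀ i, κY i)) ((∀ i, κX i) × (∀ i, κY i)) ℂ) :
    l.foldr (fun j Q => LNSstep j Q) (LNSstep a P)
      = LNSstep a (l.foldr (fun j Q => LNSstep j Q) P) := by
  induction l with
  | nil => rfl
  | cons b l ih => simp only [List.foldr_cons, ih, LNSstep_comm b a]

lemma trace_foldr_mul (l : List (Fin N'))
    (P Q : Matrix ((∀ i, κX i) × (∀ i, κY i)) ((∀ i, κX i) × (∀ i, κY i)) ℂ) :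
    ((l.foldr (fun j R => LNSstep j R) P) * Q).trace
      = (P * l.foldr (fun j R => LNSstep j R) Q).trace := by
  induction l generalizing Q with
  | nil => rfl
  | cons a l ih =>
      simp only [List.foldr_cons]
      rw [trace_LNSstep_mul, ih (LNSstep a Q), LNSstep_foldr]

lemma trace_LNS_mul
    (P Q : Matrix ((∀ i, κX i) × (∀ i, κY i)) ((∀ i, κX i) × (∀ i, κY i)) ℂ) :
    ((LNS P) * Q).trace = (P * LNS Q).trace :=
  trace_foldr_mul _ P Q

/-- Involution used for trace preservation of `floorY`. -/
def updEquivI (j : Fin N') :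
    ((((∀ i, κX i) × (∀ i, κY i))) × κY j) ≃ ((((∀ i, κX i) × (∀ i, κY i))) × κY j) where
  toFun := fun pc => ((pc.1.1, Function.update pc.1.2 j pc.2), pc.1.2 j)
  invFun := fun pc => ((pc.1.1, Function.update pc.1.2 j pc.2), pc.1.2 j)
  left_inv := by rintro ⟨⟨x, y⟩, c⟩; simp [Function.update_idem]
  right_inv := by rintro ⟨⟨x, y⟩, c⟩; simp [Function.update_idem]

/-- Involution used for trace preservation of `floorXY`. -/
def updEquivI2 (j : Fin N') :
    ((((∀ i, κX i) × (∀ i, κY i))) × (κX j × κY j))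
      ≃ ((((∀ i, κX i) × (∀ i, κY i))) × (κX j × κY j)) where
  toFun := fun pc => ((Function.update pc.1.1 j pc.2.1, Function.update pc.1.2 j pc.2.2),
    (pc.1.1 j, pc.1.2 j))
  invFun := fun pc => ((Function.update pc.1.1 j pc.2.1, Function.update pc.1.2 j pc.2.2),
    (pc.1.1 j, pc.1.2 j))
  left_inv := by rintro ⟨⟨x, y⟩, a, c⟩; simp [Function.update_idem]
  right_inv := by rintro ⟨⟨x, y⟩, a, c⟩; simp [Function.update_idem]

lemma sum_I_update (j : Fin N') (f : ((∀ i, κX i) × (∀ i, κY i)) → ℂ) :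
    ∑ p : (∀ i, κX i) × (∀ i, κY i), ∑ c : κY j, f (p.1, Function.update p.2 j c)
      = (Fintype.card (κY j) : ℂ) * ∑ p, f p := by
  calc ∑ p : (∀ i, κX i) × (∀ i, κY i), ∑ c : κY j, f (p.1, Function.update p.2 j c)
      = ∑ q : ((∀ i, κX i) × (∀ i, κY i)) × κY j, f (q.1.1, Function.update q.1.2 j q.2) :=
        (Fintype.sum_prod_type' (f := fun (a : (∀ i, κX i) × (∀ i, κY i)) (b : κY j) => f (a.1, Function.update a.2 j b))).symm
    _ = ∑ q : ((∀ i, κX i) × (∀ i, κY i)) × κY j, f q.1 :=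
        Fintype.sum_equiv (updEquivI j)
          (fun q => f (q.1.1, Function.update q.1.2 j q.2)) (fun q => f q.1) (fun q => rfl)
    _ = (Fintype.card (κY j) : ℂ) * ∑ p, f p := sum_fst f

lemma sum_I_update2 (j : Fin N') (f : ((∀ i, κX i) × (∀ i, κY i)) → ℂ) :
    ∑ p : (∀ i, κX i) × (∀ i, κY i), ∑ a : κX j, ∑ c : κY j,
        f (Function.update p.1 j a, Function.update p.2 j c)
      = ((Fintype.card (κX j) : ℂ) * (Fintype.card (κY j) : ℂ)) * ∑ p, f p := by
  have h0 : ∀ p : (∀ i, κX i) × (∀ i, κY i),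
      ∑ a : κX j, ∑ c : κY j, f (Function.update p.1 j a, Function.update p.2 j c)
        = ∑ s : κX j × κY j, f (Function.update p.1 j s.1, Function.update p.2 j s.2) :=
    fun p => (Fintype.sum_prod_type'
      (f := fun a b => f (Function.update p.1 j a, Function.update p.2 j b))).symm
  simp only [h0]
  calc ∑ p : (∀ i, κX i) × (∀ i, κY i), ∑ s : κX j × κY j,
        f (Function.update p.1 j s.1, Function.update p.2 j s.2)
      = ∑ q : ((∀ i, κX i) × (∀ i, κY i)) × (κX j × κY j),
          f (Function.update q.1.1 j q.2.1, Function.update q.1.2 j q.2.2) :=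
        (Fintype.sum_prod_type'
          (f := fun (a : (∀ i, κX i) × (∀ i, κY i)) (s : κX j × κY j) =>
            f (Function.update a.1 j s.1, Function.update a.2 j s.2))).symm
    _ = ∑ q : ((∀ i, κX i) × (∀ i, κY i)) × (κX j × κY j), f q.1 :=
        Fintype.sum_equiv (updEquivI2 j)
          (fun q => f (Function.update q.1.1 j q.2.1, Function.update q.1.2 j q.2.2))
          (fun q => f q.1) (fun q => rfl)
    _ = ((Fintype.card (κX j) : ℂ) * (Fintype.card (κY j) : ℂ)) * ∑ p, f p := by
        rw [sum_fst f, Fintype.card_prod]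
        push_cast
        ring

lemma trace_floorY (j : Fin N') (h : (Fintype.card (κY j) : ℂ) ≠ 0)
    (P : Matrix ((∀ i, κX i) × (∀ i, κY i)) ((∀ i, κX i) × (∀ i, κY i)) ℂ) :
    (floorY j P).trace = P.trace := by
  have h0 : (floorY (κX := κX) j P).trace
      = (Fintype.card (κY j) : ℂ)⁻¹ * ∑ p : (∀ i, κX i) × (∀ i, κY i), ∑ d : κY j,
          P (p.1, Function.update p.2 j d) (p.1, Function.update p.2 j d) := by
    simp only [Matrix.trace, Matrix.diag, floorY, Matrix.of_apply, eq_self_iff_true, if_true]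
    rw [Finset.mul_sum]
  rw [h0, sum_I_update j (fun p => P p p), ← mul_assoc, inv_mul_cancel₀ h, one_mul]
  rfl

lemma trace_floorXY (j : Fin N') (hx : (Fintype.card (κX j) : ℂ) ≠ 0)
    (hy : (Fintype.card (κY j) : ℂ) ≠ 0)
    (P : Matrix ((∀ i, κX i) × (∀ i, κY i)) ((∀ i, κX i) × (∀ i, κY i)) ℂ) :
    (floorXY j P).trace = P.trace := by
  have h0 : (floorXY (κX := κX) j P).trace
      = ((Fintype.card (κX j) : ℂ) * (Fintype.card (κY j) : ℂ))⁻¹ *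
          ∑ p : (∀ i, κX i) × (∀ i, κY i), ∑ a : κX j, ∑ d : κY j,
            P (Function.update p.1 j a, Function.update p.2 j d)
              (Function.update p.1 j a, Function.update p.2 j d) := by
    simp only [Matrix.trace, Matrix.diag, floorXY, Matrix.of_apply, eq_self_iff_true, if_true,
      and_self]
    rw [Finset.mul_sum]
  rw [h0, sum_I_update2 j (fun p => P p p), ← mul_assoc,
    inv_mul_cancel₀ (mul_ne_zero hx hy), one_mul]
  rfl

lemma trace_LNSstep (j : Fin N') (hx : (Fintype.card (κX j) : ℂ) ≠ 0)
    (hy : (Fintype.card (κY j) : ℂ) ≠ 0)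
    (P : Matrix ((∀ i, κX i) × (∀ i, κY i)) ((∀ i, κX i) × (∀ i, κY i)) ℂ) :
    (LNSstep j P).trace = P.trace := by
  simp only [LNSstep, Matrix.trace_add, Matrix.trace_sub, trace_floorY j hy,
    trace_floorXY j hx hy]
  ring

lemma trace_LNS (hx : ∀ j, (Fintype.card (κX j) : ℂ) ≠ 0)
    (hy : ∀ j, (Fintype.card (κY j) : ℂ) ≠ 0)
    (P : Matrix ((∀ i, κX i) × (∀ i, κY i)) ((∀ i, κX i) × (∀ i, κY i)) ℂ) :
    (LNS P).trace = P.trace := by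
  unfold LNS
  induction (List.finRange N') with
  | nil => rfl
  | cons a l ih => rw [List.foldr_cons, trace_LNSstep a (hx a) (hy a), ih]

lemma trace_one_kron_mul (Nd : Matrix (∀ i, κY i) (∀ i, κY i) ℂ)
    (E : Matrix ((∀ i, κX i) × (∀ i, κY i)) ((∀ i, κX i) × (∀ i, κY i)) ℂ)
    (hEY : (Matrix.of fun (y y' : ∀ i, κY i) => ∑ x : ∀ i, κX i, E (x, y) (x, y')) = 1) :
    (((1 : Matrix (∀ i, κX i) (∀ i, κX i) ℂ) ⊗ₖ Nd) * E).trace = Nd.trace := by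
  have hE : ∀ y y' : ∀ i, κY i, ∑ x : ∀ i, κX i, E (x, y) (x, y')
      = (1 : Matrix (∀ i, κY i) (∀ i, κY i) ℂ) y y' := by
    intro y y'
    exact congrFun (congrFun (congrArg (fun (A : Matrix (∀ i, κY i) (∀ i, κY i) ℂ) => (A : (∀ i, κY i) → (∀ i, κY i) → ℂ)) hEY) y) y'
  calc (((1 : Matrix (∀ i, κX i) (∀ i, κX i) ℂ) ⊗ₖ Nd) * E).trace
      = ∑ p : (∀ i, κX i) × (∀ i, κY i), ∑ q : (∀ i, κX i) × (∀ i, κY i),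
          ((1 : Matrix (∀ i, κX i) (∀ i, κX i) ℂ) p.1 q.1 * Nd p.2 q.2) * E q p := by
        simp [Matrix.trace, Matrix.diag, Matrix.mul_apply, Matrix.kroneckerMap_apply]
    _ = ∑ p : (∀ i, κX i) × (∀ i, κY i), ∑ y' : ∀ i, κY i, Nd p.2 y' * E (p.1, y') p := by
        refine Finset.sum_congr rfl fun p _ => ?_
        rw [Fintype.sum_prod_type' (f := fun (x' : ∀ i, κX i) (y' : ∀ i, κY i) =>
          ((1 : Matrix (∀ i, κX i) (∀ i, κX i) ℂ) p.1 x' * Nd p.2 y') * E (x', y') p)]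
        rw [Finset.sum_comm]
        refine Finset.sum_congr rfl fun y' _ => ?_
        simp [Matrix.one_apply, ite_mul, Finset.sum_ite_eq]
    _ = ∑ x : ∀ i, κX i, ∑ y : ∀ i, κY i, ∑ y' : ∀ i, κY i, Nd y y' * E (x, y') (x, y) := by
        rw [Fintype.sum_prod_type' (f := fun (x : ∀ i, κX i) (y : ∀ i, κY i) =>
          ∑ y' : ∀ i, κY i, Nd y y' * E (x, y') (x, y))]
    _ = ∑ y : ∀ i, κY i, ∑ y' : ∀ i, κY i, ∑ x : ∀ i, κX i, Nd y y' * E (x, y') (x, y) :=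
        sum_swap3 _
    _ = ∑ y : ∀ i, κY i, ∑ y' : ∀ i, κY i,
          Nd y y' * (1 : Matrix (∀ i, κY i) (∀ i, κY i) ℂ) y' y := by
        refine Finset.sum_congr rfl fun y _ => Finset.sum_congr rfl fun y' _ => ?_
        rw [← Finset.mul_sum, hE y' y]
    _ = Nd.trace := by
        simp [Matrix.one_apply, mul_ite, Finset.sum_ite_eq, Matrix.trace, Matrix.diag]

end AuxWeakDuality

theorem zero_error_capacity_weak_duality
    (J E F M : Matrix ((∀ i, κX i) × (∀ i, κY i)) ((∀ i, κX i) × (∀ i, κY i)) ℂ)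
    (Nd : Matrix (∀ i, κY i) (∀ i, κY i) ℂ) (m : ℝ)
    (hJpsd : J.PosSemidef) (hJns : LNS J = J)
    (hE : E.IsHermitian) (hF : F.IsHermitian) (hM : M.IsHermitian) (hN : Nd.IsHermitian)
    -- primal feasibility
    (hEJ : m ≤ ((E * J).trace).re)
    (hEY : (Matrix.of fun (y y' : ∀ i, κY i) => ∑ x : ∀ i, κX i, E (x, y) (x, y')) = 1)
    (hEpos : E.PosSemidef) (hEF : (F - E).PosSemidef)
    (hFns : LNS F = ((m : ℂ) / (Fintype.card (∀ i, κX i) : ℂ)) • 1)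
    -- dual feasibility
    (hMpos : (LNS M).PosSemidef)
    (hdual : (LNS M + (1 : Matrix (∀ i, κX i) (∀ i, κX i) ℂ) ⊗ₖ Nd -
        ((1 : ℂ) + M.trace / (Fintype.card (∀ i, κX i) : ℂ)) • J).PosSemidef) :
    m ≤ (Nd.trace).re := by
  by_cases hXne : Nonempty (∀ i, κX i)
  · by_cases hYne : Nonempty (∀ i, κY i)
    · -- main case
      obtain ⟨fx⟩ := hXne
      obtain ⟨fy⟩ := hYne
      have hx : ∀ j, (Fintype.card (κX j) : ℂ) ≠ 0 := fun j =>
        Nat.cast_ne_zero.mpr (Fintype.card_pos_iff.mpr ⟨fx j⟩).ne'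
      have hy : ∀ j, (Fintype.card (κY j) : ℂ) ≠ 0 := fun j =>
        Nat.cast_ne_zero.mpr (Fintype.card_pos_iff.mpr ⟨fy j⟩).ne'
      set dX : ℕ := Fintype.card (∀ i, κX i) with hdX
      have hdXpos : 0 < dX := Fintype.card_pos_iff.mpr ⟨fx⟩
      have hdXR : (0 : ℝ) < (dX : ℝ) := by exact_mod_cast hdXpos
      -- trace of M is real and nonnegative
      have hMt : (LNS M).trace = M.trace := trace_LNS hx hy M
      have hMt0 : 0 ≤ M.trace := hMt ▸ trace_nonneg_of_psd hMpos
      set s : ℝ := (M.trace).re with hs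
      have hs0 : 0 ≤ s := (Complex.le_def.mp hMt0).1
      have hMreal : M.trace = (s : ℂ) :=
        (Complex.ext rfl (by simpa using ((Complex.le_def.mp hMt0).2).symm))
      -- trace of J*E is real and nonnegative
      have hJE0 : 0 ≤ (J * E).trace := trace_mul_nonneg_of_psd hJpsd hEpos
      set r : ℝ := ((J * E).trace).re with hr
      have hr0 : 0 ≤ r := (Complex.le_def.mp hJE0).1
      have hJEreal : (J * E).trace = (r : ℂ) :=
        (Complex.ext rfl (by simpa using ((Complex.le_def.mp hJE0).2).symm))
      have hrm : m ≤ r := by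
        rw [hr, Matrix.trace_mul_comm]; exact hEJ
      -- step 1 : tr (LNS M * E) ≤ tr (LNS M * F) = (m/dX) * s
      have h1 : 0 ≤ ((LNS M) * F).trace - ((LNS M) * E).trace := by
        have := trace_mul_nonneg_of_psd hMpos hEF
        rwa [Matrix.mul_sub, Matrix.trace_sub] at this
      have h2 : ((LNS M) * F).trace = ((m : ℂ) / (dX : ℂ)) * (s : ℂ) := by
        rw [trace_LNS_mul M F, hFns, Matrix.mul_smul, Matrix.mul_one, Matrix.trace_smul,
          smul_eq_mul, hMreal]
      -- step 2 : dual feasibility traced against E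
      have h3 : 0 ≤ ((LNS M) * E).trace + Nd.trace -
          ((1 : ℂ) + (s : ℂ) / (dX : ℂ)) * (r : ℂ) := by
        have h := trace_mul_nonneg_of_psd hdual hEpos
        rwa [Matrix.sub_mul, Matrix.add_mul, Matrix.smul_mul, Matrix.trace_sub,
          Matrix.trace_add, Matrix.trace_smul, trace_one_kron_mul Nd E hEY, smul_eq_mul,
          hMreal, hJEreal] at h
      -- pass to real parts
      set a : ℝ := (((LNS M) * E).trace).re with ha
      have h1re : a ≤ (m / (dX : ℝ)) * s := by
        have := (Complex.le_def.mp h1).1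
        rw [Complex.sub_re, h2] at this
        have h2re : (((m : ℂ) / (dX : ℂ)) * (s : ℂ)).re = (m / (dX : ℝ)) * s := by
          have : ((m : ℂ) / (dX : ℂ)) * (s : ℂ) = (((m / (dX : ℝ)) * s : ℝ) : ℂ) := by
            push_cast; ring
          rw [this, Complex.ofReal_re]
        simp only [Complex.zero_re] at this
        rw [h2re] at this
        linarith
      have h3re : 0 ≤ a + (Nd.trace).re - (1 + s / (dX : ℝ)) * r := by
        have := (Complex.le_def.mp h3).1
        rw [Complex.sub_re, Complex.add_re] at this
        have hcr : (((1 : ℂ) + (s : ℂ) / (dX : ℂ)) * (r : ℂ)).re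
            = (1 + s / (dX : ℝ)) * r := by
          have : ((1 : ℂ) + (s : ℂ) / (dX : ℂ)) * (r : ℂ)
              = (((1 + s / (dX : ℝ)) * r : ℝ) : ℂ) := by push_cast; ring
          rw [this, Complex.ofReal_re]
        rw [hcr] at this
        simpa using this
      -- final arithmetic
      have hcoeff : 0 ≤ 1 + s / (dX : ℝ) := by positivity
      have hmr : (1 + s / (dX : ℝ)) * m ≤ (1 + s / (dX : ℝ)) * r :=
        mul_le_mul_of_nonneg_left hrm hcoeff
      have hfield : (1 + s / (dX : ℝ)) * m - (m / (dX : ℝ)) * s = m := by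
        field_simp
        ring
      linarith
    · -- Y is empty
      have hYe : IsEmpty (∀ i, κY i) := not_nonempty_iff.mp hYne
      haveI : IsEmpty ((∀ i, κX i) × (∀ i, κY i)) := ⟨fun p => hYe.false p.2⟩
      have hEJ0 : (E * J).trace = 0 := by simp [Matrix.trace]
      have hm : m ≤ 0 := by simpa [hEJ0] using hEJ
      have hNd0 : Nd.trace = 0 := by simp [Matrix.trace]
      rw [hNd0]
      simpa using hm
  · -- X is empty
    have hXe : IsEmpty (∀ i, κX i) := not_nonempty_iff.mp hXne
    haveI : IsEmpty ((∀ i, κX i) × (∀ i, κY i)) := ⟨fun p => hXe.false p.1⟩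
    have hEJ0 : (E * J).trace = 0 := by simp [Matrix.trace]
    have hm : m ≤ 0 := by simpa [hEJ0] using hEJ
    by_cases hYne : Nonempty (∀ i, κY i)
    · obtain ⟨y⟩ := hYne
      have h1 := congrFun (congrFun (congrArg (fun (A : Matrix (∀ i, κY i) (∀ i, κY i) ℂ) =>
        (A : (∀ i, κY i) → (∀ i, κY i) → ℂ)) hEY) y) y
      simp [Matrix.one_apply] at h1
    · have hYe : IsEmpty (∀ i, κY i) := not_nonempty_iff.mp hYne
      have hNd0 : Nd.trace = 0 := by simp [Matrix.trace]
      rw [hNd0]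
      simpa using hm

end ICO
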